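/- arXiv:math/0610686 — 2 statements merged into one kernel-verified Lean document; each statement's English description precedes it below -/
import Mathlib

section
/- For every r > 0 and δ > 0 there exists N_δ such that for all N > N_δ: if a polynomial ψ(z) = ∑_{j=0}^N α_j √(C(N,j)) z^j satisfies max_{|z|≤r} |ψ(z)| > (1+r²)^{N/2} (1+δ)^{N/2}, then there exists an index j with |α_j| > N. -/
theorem large_max_implies_large_coeff (r δ : ℝ) (hr : 0 < r) (hδ : 0 < δ) :
    ∃ N₀ : ℕ, ∀ N > N₀, ∀ α : Fin (N + 1) → ℂ,
      (∃ z : ℂ, ‖z‖ ≤ r ∧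
        (1 + r ^ 2) ^ ((N : ℝ) / 2) * (1 + δ) ^ ((N : ℝ) / 2) <
          ‖∑ j : Fin (N + 1), α j * (Real.sqrt (N.choose j) : ℂ) * z ^ (j : ℕ)‖) →
      ∃ j : Fin (N + 1), (N : ℝ) < ‖α j‖ := by
  set b := Real.sqrt (1 + δ) with hbdef
  have hb1 : 1 < b := by
    have h := Real.sqrt_lt_sqrt zero_le_one (by linarith : (1:ℝ) < 1 + δ)
    simpa [hbdef] using h
  have hlo : (fun n : ℕ => ((n : ℝ) ^ 3)) =o[Filter.atTop] fun n => b ^ n :=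
    isLittleO_pow_const_const_pow_of_one_lt 3 hb1
  have hev := hlo.def zero_lt_one
  rw [Filter.eventually_atTop] at hev
  obtain ⟨M, hM⟩ := hev
  refine ⟨max M 2, fun N hN α ⟨z, hz, hlt⟩ => ?_⟩
  by_contra hcon
  push_neg at hcon
  have hN2 : 2 ≤ N := le_of_lt (lt_of_le_of_lt (le_max_right M 2) hN)
  have hNM : M ≤ N := le_of_lt (lt_of_le_of_lt (le_max_left M 2) hN)
  have hx : (0:ℝ) < 1 + r ^ 2 := by positivity
  have hrpow : (1 + r ^ 2) ^ ((N:ℝ)/2) = Real.sqrt ((1 + r ^ 2) ^ N) := by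
    rw [Real.sqrt_eq_rpow, ← Real.rpow_natCast (1 + r ^ 2) N, ← Real.rpow_mul hx.le]
    ring_nf
  have hbpow : (1 + δ) ^ ((N:ℝ)/2) = b ^ N := by
    rw [hbdef, Real.sqrt_eq_rpow, ← Real.rpow_natCast ((1 + δ) ^ (1/2:ℝ)) N,
      ← Real.rpow_mul (by linarith : (0:ℝ) ≤ 1 + δ)]
    congr 1
    push_cast
    ring
  have hterm : ∀ j : Fin (N+1),
      Real.sqrt (N.choose j) * r ^ (j:ℕ) ≤ (1 + r ^ 2) ^ ((N:ℝ)/2) := by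
    intro j
    rw [hrpow]
    have heq : Real.sqrt (N.choose j) * r ^ (j:ℕ)
        = Real.sqrt ((N.choose j) * (r ^ 2) ^ (j:ℕ)) := by
      rw [Real.sqrt_mul (by positivity),
        ← Real.sqrt_sq (by positivity : (0:ℝ) ≤ r ^ (j:ℕ))]
      congr 1
      ring
    rw [heq]
    apply Real.sqrt_le_sqrt
    have hexp : (1 + r ^ 2) ^ N
        = ∑ k ∈ Finset.range (N+1), (r ^ 2) ^ k * 1 ^ (N - k) * (N.choose k) := by
      rw [add_comm, add_pow]
    rw [hexp]
    have hjmem : (j:ℕ) ∈ Finset.range (N+1) := Finset.mem_range.mpr j.isLt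
    calc ((N.choose j):ℝ) * (r ^ 2) ^ (j:ℕ)
        = (r ^ 2) ^ (j:ℕ) * 1 ^ (N - (j:ℕ)) * (N.choose (j:ℕ)) := by ring
      _ ≤ _ := Finset.single_le_sum
            (f := fun k => (r ^ 2) ^ k * 1 ^ (N - k) * ((N.choose k) : ℝ))
            (fun k _ => mul_nonneg (mul_nonneg (by positivity) (by positivity))
              (Nat.cast_nonneg _)) hjmem
  have hbound : ‖∑ j : Fin (N + 1), α j * (Real.sqrt (N.choose j) : ℂ) * z ^ (j:ℕ)‖
      ≤ (N + 1 : ℝ) * ((N:ℝ) * (1 + r ^ 2) ^ ((N:ℝ)/2)) := by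
    calc ‖∑ j : Fin (N + 1), α j * (Real.sqrt (N.choose j) : ℂ) * z ^ (j:ℕ)‖
        ≤ ∑ j : Fin (N+1), ‖α j * (Real.sqrt (N.choose j) : ℂ) * z ^ (j:ℕ)‖ :=
          norm_sum_le _ _
      _ ≤ ∑ _j : Fin (N+1), (N:ℝ) * (1 + r ^ 2) ^ ((N:ℝ)/2) := by
          apply Finset.sum_le_sum
          intro j _
          rw [norm_mul, norm_mul, Complex.norm_real,
            Real.norm_of_nonneg (Real.sqrt_nonneg _), norm_pow]
          calc ‖α j‖ * Real.sqrt (N.choose j) * ‖z‖ ^ (j:ℕ)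
              ≤ (N:ℝ) * Real.sqrt (N.choose j) * r ^ (j:ℕ) := by
                gcongr <;>
                  first
                    | exact hcon j
                    | exact norm_nonneg z
                    | exact hz
                    | exact Real.sqrt_nonneg _
            _ = (N:ℝ) * (Real.sqrt (N.choose j) * r ^ (j:ℕ)) := by ring
            _ ≤ (N:ℝ) * (1 + r ^ 2) ^ ((N:ℝ)/2) :=
                mul_le_mul_of_nonneg_left (hterm j) (Nat.cast_nonneg N)
      _ = (N + 1 : ℝ) * ((N:ℝ) * (1 + r ^ 2) ^ ((N:ℝ)/2)) := by
          rw [Finset.sum_const, Finset.card_univ, Fintype.card_fin]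
          push_cast
          ring
  -- exponential beats polynomial
  have hMN := hM N hNM
  simp only [norm_pow, Real.norm_natCast, Real.norm_eq_abs, one_mul] at hMN
  have hbN : (N:ℝ) ^ 3 ≤ b ^ N := by
    have : |b ^ N| = b ^ N := abs_of_nonneg (pow_nonneg (by linarith) N)
    calc (N:ℝ)^3 ≤ ‖(N:ℝ)^3‖ := le_abs_self _
      _ ≤ ‖b ^ N‖ := hM N hNM |>.trans (by simp)
      _ = b ^ N := by rw [Real.norm_eq_abs, this]
  have hN3 : (N + 1 : ℝ) * (N:ℝ) ≤ (N:ℝ)^3 := by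
    have h2 : (2:ℝ) ≤ (N:ℝ) := by exact_mod_cast hN2
    nlinarith [mul_nonneg (by linarith : (0:ℝ) ≤ (N:ℝ) - 2) (sq_nonneg (N:ℝ)),
      mul_nonneg (by linarith : (0:ℝ) ≤ (N:ℝ) - 1) (by linarith : (0:ℝ) ≤ (N:ℝ))]
  have hrp : (0:ℝ) < (1 + r ^ 2) ^ ((N:ℝ)/2) := Real.rpow_pos_of_pos hx _
  rw [hbpow] at hlt
  nlinarith [hbound, hlt, mul_le_mul_of_nonneg_right hN3 hrp.le,
    mul_le_mul_of_nonneg_right hbN hrp.le]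
end

section
/- For every r > 0 there exist c_r > 0 and N_r such that for all N > N_r, the probability that the Gaussian random SU(2) polynomial ψ_{α,N}(z) = ∑_{j=0}^N α_j √(C(N,j)) z^j has no zeros in the disk B(0,r) is at least e^{−c_r N²}. -/
open MeasureTheory
open scoped ENNReal NNReal

/-- The standard complex Gaussian measure on ℂ, with density `(1/π) e^{-|w|²}`. -/
noncomputable def stdGaussianC : Measure ℂ :=
  volume.withDensity fun w => ENNReal.ofReal (Real.exp (-(‖w‖) ^ 2) / Real.pi)

instance : SigmaFinite stdGaussianC := by
  unfold stdGaussianC; infer_instance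

lemma stdGaussianC_ball_lb (a : ℂ) (ρ : ℝ) (hρ : 0 < ρ) :
    ENNReal.ofReal (Real.exp (-(‖a‖ + ρ) ^ 2) * ρ ^ 2) ≤
      stdGaussianC (Metric.closedBall a ρ) := by
  rw [stdGaussianC, withDensity_apply _ measurableSet_closedBall]
  have h1 : ∫⁻ _ in Metric.closedBall a ρ,
      ENNReal.ofReal (Real.exp (-(‖a‖ + ρ) ^ 2) / Real.pi) ≤
      ∫⁻ w in Metric.closedBall a ρ,
        ENNReal.ofReal (Real.exp (-(‖w‖) ^ 2) / Real.pi) := by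
    refine setLIntegral_mono' measurableSet_closedBall fun w hw => ?_
    apply ENNReal.ofReal_le_ofReal
    have hw' : ‖w‖ ≤ ‖a‖ + ρ := by
      have := Metric.mem_closedBall.mp hw
      rw [Complex.dist_eq] at this
      calc ‖w‖ = ‖a + (w - a)‖ := by ring_nf
        _ ≤ ‖a‖ + ‖w - a‖ := norm_add_le _ _
        _ ≤ ‖a‖ + ρ := by linarith
    have h2 : (‖w‖) ^ 2 ≤ (‖a‖ + ρ) ^ 2 := by
      have h0 : (0:ℝ) ≤ ‖w‖ := norm_nonneg w
      nlinarith
    have h3 : Real.exp (-(‖a‖ + ρ) ^ 2) ≤ Real.exp (-(‖w‖) ^ 2) :=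
      Real.exp_le_exp.mpr (by linarith)
    exact (div_le_div_iff_of_pos_right Real.pi_pos).mpr h3
  refine le_trans ?_ h1
  rw [setLIntegral_const, Complex.volume_closedBall]
  have hπ : ((NNReal.pi : ℝ≥0∞)) = ENNReal.ofReal Real.pi := by
    rw [← NNReal.coe_real_pi, ENNReal.ofReal_coe_nnreal]
  rw [hπ, ← ENNReal.ofReal_pow hρ.le, ← ENNReal.ofReal_mul (by positivity),
    ← ENNReal.ofReal_mul (by positivity)]
  apply ENNReal.ofReal_le_ofReal
  apply le_of_eq
  have hπ0 : Real.pi ≠ 0 := Real.pi_ne_zero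
  field_simp

set_option maxHeartbeats 1000000 in
theorem hole_probability_lower_bound (r : ℝ) (hr : 0 < r) :
    ∃ c > (0 : ℝ), ∃ N₀ : ℕ, ∀ N > N₀,
      ENNReal.ofReal (Real.exp (-c * (N : ℝ) ^ 2)) ≤
      (Measure.pi fun _ : Fin (N + 1) => stdGaussianC)
        {α : Fin (N + 1) → ℂ | ∀ z ∈ Metric.closedBall (0 : ℂ) r,
          (∑ j : Fin (N + 1), α j * (Real.sqrt (N.choose j) : ℂ) * z ^ (j : ℕ)) ≠ 0} := by
  set B : ℝ := 2 * (1 + r) with hB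
  have hB1 : (1:ℝ) < B := by simp only [hB]; nlinarith
  have hBpos : (0:ℝ) < B := lt_trans one_pos hB1
  refine ⟨2 * Real.log B + 100, by nlinarith [Real.log_pos hB1], 0, fun N hN => ?_⟩
  have hN1 : 1 ≤ N := hN
  have hNR : (1:ℝ) ≤ (N:ℝ) := by exact_mod_cast hN1
  set δ : ℝ := (4 * (N + 1) * B ^ N)⁻¹ with hδ
  have hden : (0:ℝ) < 4 * (N + 1) * B ^ N := by positivity
  have hδpos : 0 < δ := by positivity
  have hδle : δ ≤ 1 := by
    rw [hδ]
    have hBN : (1:ℝ) ≤ B ^ N := one_le_pow₀ hB1.le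
    have h1 : (1:ℝ) ≤ 4 * ((N:ℝ) + 1) * B ^ N := by nlinarith
    calc (4 * ((N:ℝ) + 1) * B ^ N)⁻¹ ≤ 1⁻¹ := by
          apply inv_anti₀ one_pos h1
      _ = 1 := inv_one
  -- the product set
  set S : Fin (N + 1) → Set ℂ := fun i =>
    if i = 0 then Metric.closedBall 1 (1/2) else Metric.closedBall 0 δ with hS
  -- inclusion
  have hsub : Set.univ.pi S ⊆
      {α : Fin (N + 1) → ℂ | ∀ z ∈ Metric.closedBall (0 : ℂ) r,
        (∑ j : Fin (N + 1), α j * (Real.sqrt (N.choose j) : ℂ) * z ^ (j : ℕ)) ≠ 0} := by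
    intro α hα z hz
    have h0 : α 0 ∈ Metric.closedBall (1:ℂ) (1/2) := by
      have := hα 0 trivial; simpa [hS] using this
    have habs0 : (1/2:ℝ) ≤ ‖α 0‖ := by
      have hd : ‖α 0 - 1‖ ≤ 1/2 := by
        have := Metric.mem_closedBall.mp h0
        rwa [dist_eq_norm] at this
      have h3 := norm_sub_norm_le (1:ℂ) (1 - α 0)
      simp only [norm_one, sub_sub_cancel] at h3
      have h4 : ‖(1:ℂ) - α 0‖ ≤ 1/2 := by rw [norm_sub_rev]; exact hd
      linarith
    have hzr : ‖z‖ ≤ r := by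
      have := Metric.mem_closedBall.mp hz
      rwa [Complex.dist_eq, sub_zero] at this
    -- bound on each non-constant term
    have hterm : ∀ j : Fin N,
        ‖α j.succ * (Real.sqrt (N.choose j.succ) : ℂ) * z ^ (j.succ : ℕ)‖ ≤
          (4 * ((N:ℝ) + 1))⁻¹ := by
      intro j
      have hαj : ‖α j.succ‖ ≤ δ := by
        have h := hα j.succ trivial
        simp only [hS, if_neg (Fin.succ_ne_zero j)] at h
        have := Metric.mem_closedBall.mp h
        rwa [Complex.dist_eq, sub_zero] at this
      set k : ℕ := (j.succ : ℕ) with hk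
      have hkN : k ≤ N := by
        have := (j.succ).isLt; omega
      -- √C ≤ C ≤ 2^N
      have hC1 : (1:ℝ) ≤ (N.choose k : ℝ) := by
        exact_mod_cast Nat.one_le_iff_ne_zero.mpr (Nat.choose_pos hkN).ne'
      have hsqrtC : Real.sqrt (N.choose k) ≤ (N.choose k : ℝ) := by
        have h := Real.sqrt_le_sqrt (show (N.choose k : ℝ) ≤ (N.choose k : ℝ)^2 by nlinarith)
        rwa [Real.sqrt_sq (by positivity)] at h
      have hC2 : (N.choose k : ℝ) ≤ 2 ^ N := by
        have : N.choose k ≤ 2 ^ N := by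
          rw [← Nat.sum_range_choose]
          exact Finset.single_le_sum (fun i _ => Nat.zero_le _)
            (Finset.mem_range.mpr (Nat.lt_succ_of_le hkN))
        exact_mod_cast this
      have hz2 : ‖z‖ ^ k ≤ (1 + r) ^ N := by
        calc ‖z‖ ^ k ≤ (1 + r) ^ k :=
              pow_le_pow_left₀ (norm_nonneg z) (by linarith) k
          _ ≤ (1 + r) ^ N := pow_le_pow_right₀ (by linarith) hkN
      have habs : ‖α j.succ * (Real.sqrt (N.choose k) : ℂ) * z ^ k‖ =
          ‖α j.succ‖ * Real.sqrt (N.choose k) * ‖z‖ ^ k := by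
        rw [norm_mul, norm_mul, norm_pow, Complex.norm_real, Real.norm_eq_abs,
          abs_of_nonneg (Real.sqrt_nonneg _)]
      rw [habs]
      have hBN : Real.sqrt (N.choose k) * ‖z‖ ^ k ≤ B ^ N := by
        calc Real.sqrt (N.choose k) * ‖z‖ ^ k
            ≤ (2:ℝ) ^ N * (1 + r) ^ N := by
              apply mul_le_mul (le_trans hsqrtC hC2) hz2 (by positivity) (by positivity)
          _ = B ^ N := by rw [hB, mul_pow]
      calc ‖α j.succ‖ * Real.sqrt (N.choose k) * ‖z‖ ^ k
          = ‖α j.succ‖ * (Real.sqrt (N.choose k) * ‖z‖ ^ k) := by ring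
        _ ≤ δ * B ^ N := by
            apply mul_le_mul hαj hBN (by positivity) hδpos.le
        _ = (4 * ((N:ℝ) + 1))⁻¹ := by
            rw [hδ, mul_inv, mul_assoc, inv_mul_cancel₀ (by positivity : (B:ℝ)^N ≠ 0), mul_one]
    -- sum bound
    have hsum : ‖∑ j : Fin N,
        α j.succ * (Real.sqrt (N.choose j.succ) : ℂ) * z ^ (j.succ : ℕ)‖ ≤ 1/4 := by
      calc ‖∑ j : Fin N,
            α j.succ * (Real.sqrt (N.choose j.succ) : ℂ) * z ^ (j.succ : ℕ)‖
          ≤ ∑ j : Fin N,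
            ‖α j.succ * (Real.sqrt (N.choose j.succ) : ℂ) * z ^ (j.succ : ℕ)‖ :=
            norm_sum_le _ _
        _ ≤ ∑ _j : Fin N, (4 * ((N:ℝ) + 1))⁻¹ := Finset.sum_le_sum fun j _ => hterm j
        _ = (N:ℝ) * (4 * ((N:ℝ) + 1))⁻¹ := by
            rw [Finset.sum_const, Finset.card_univ, Fintype.card_fin, nsmul_eq_mul]
        _ ≤ 1/4 := by
            rw [mul_inv]
            rw [div_eq_mul_inv, one_mul]
            have h1 : (N:ℝ) * (4⁻¹ * ((N:ℝ)+1)⁻¹) = 4⁻¹ * ((N:ℝ) * ((N:ℝ)+1)⁻¹) := by ring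
            rw [h1]
            have h2 : (N:ℝ) * ((N:ℝ)+1)⁻¹ ≤ 1 := by
              rw [mul_inv_le_iff₀ (by positivity), one_mul]; linarith
            nlinarith
    -- conclude
    rw [Fin.sum_univ_succ]
    have h00 : α 0 * (Real.sqrt (N.choose ((0 : Fin (N+1)) : ℕ)) : ℂ) *
        z ^ (((0 : Fin (N+1))) : ℕ) = α 0 := by
      simp [Nat.choose_zero_right]
    rw [h00]
    intro hcon
    have hlb : (1/4:ℝ) ≤ ‖α 0 + ∑ j : Fin N,
        α j.succ * (Real.sqrt (N.choose j.succ) : ℂ) * z ^ (j.succ : ℕ)‖ := by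
      set s := ∑ j : Fin N, α j.succ * (Real.sqrt (N.choose j.succ) : ℂ) * z ^ (j.succ : ℕ)
        with hs
      have h5 := norm_sub_le (α 0 + s) s
      simp only [add_sub_cancel_right] at h5
      have h6 : ‖s‖ ≤ 1/4 := by exact hsum
      have h7 : (1/2:ℝ) ≤ ‖α 0‖ := by exact habs0
      linarith
    rw [hcon] at hlb
    simp at hlb
    linarith
  -- measure computation
  refine le_trans ?_ (measure_mono hsub)
  rw [Measure.pi_pi]
  -- lower bound each factor
  have hf0 : ENNReal.ofReal (Real.exp (-(3/2:ℝ)^2) * (1/2)^2) ≤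
      stdGaussianC (Metric.closedBall (1:ℂ) (1/2)) := by
    have h := stdGaussianC_ball_lb 1 (1/2) (by norm_num)
    rw [show ‖(1:ℂ)‖ + 1/2 = (3/2:ℝ) by rw [norm_one]; norm_num] at h
    exact h
  have hfj : ENNReal.ofReal (Real.exp (-1) * δ^2) ≤
      stdGaussianC (Metric.closedBall (0:ℂ) δ) := by
    refine le_trans ?_ (stdGaussianC_ball_lb 0 δ hδpos)
    apply ENNReal.ofReal_le_ofReal
    have : Real.exp (-1) ≤ Real.exp (-(‖(0:ℂ)‖ + δ)^2) := by
      apply Real.exp_le_exp.mpr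
      simp only [norm_zero, zero_add]
      nlinarith
    nlinarith [Real.exp_pos (-1), sq_nonneg δ]
  -- product lower bound
  have hprod : ENNReal.ofReal (Real.exp (-(3/2:ℝ)^2) * (1/2)^2 * (Real.exp (-1) * δ^2) ^ N) ≤
      ∏ i : Fin (N+1), stdGaussianC (S i) := by
    calc ENNReal.ofReal (Real.exp (-(3/2:ℝ)^2) * (1/2)^2 * (Real.exp (-1) * δ^2) ^ N)
        = ∏ i : Fin (N+1), ENNReal.ofReal
            (if i = 0 then Real.exp (-(3/2:ℝ)^2) * (1/2)^2 else Real.exp (-1) * δ^2) := by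
          rw [← ENNReal.ofReal_prod_of_nonneg]
          · congr 1
            rw [Fin.prod_univ_succ]
            simp only [if_pos rfl]
            congr 1
            rw [Finset.prod_congr rfl (fun j _ => by rw [if_neg (Fin.succ_ne_zero j)])]
            rw [Finset.prod_const, Finset.card_univ, Fintype.card_fin]
          · intro i _
            split <;> positivity
      _ ≤ ∏ i : Fin (N+1), stdGaussianC (S i) := by
          apply Finset.prod_le_prod'
          intro i _
          by_cases hi : i = 0
          · simp only [hi, hS, if_pos rfl]; exact hf0
          · simp only [hS, if_neg hi]; exact hfj
  refine le_trans ?_ hprod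
  -- final real inequality
  apply ENNReal.ofReal_le_ofReal
  have hlogδ : Real.log δ = -(Real.log 4 + Real.log ((N:ℝ)+1) + (N:ℝ) * Real.log B) := by
    rw [hδ, Real.log_inv]
    congr 1
    rw [Real.log_mul (by positivity) (by positivity), Real.log_mul (by positivity) (by positivity),
      Real.log_pow]
  have hδeq : δ ^ (2*N) = Real.exp ((2*N : ℕ) * Real.log δ) := by
    rw [Real.exp_nat_mul, Real.exp_log hδpos]
  have hrhs : Real.exp (-(3/2:ℝ)^2) * (1/2)^2 * (Real.exp (-1) * δ^2) ^ N =
      Real.exp (-(9/4:ℝ) - Real.log 4 - N + (2*N : ℕ) * Real.log δ) := by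
    rw [mul_pow, ← Real.exp_nat_mul, ← pow_mul, hδeq]
    have h14 : ((1:ℝ)/2)^2 = Real.exp (-Real.log 4) := by
      rw [Real.exp_neg, Real.exp_log (by norm_num)]; norm_num
    rw [h14, ← Real.exp_add, ← Real.exp_add, ← Real.exp_add]
    congr 1
    push_cast
    ring
  rw [hrhs]
  apply Real.exp_le_exp.mpr
  have hlog4 : Real.log 4 ≤ 4 := Real.log_le_self (by norm_num)
  have hlog4' : 0 ≤ Real.log 4 := Real.log_nonneg (by norm_num)
  have hlogN : Real.log ((N:ℝ)+1) ≤ 2*(N:ℝ) := by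
    have := Real.log_le_self (show (0:ℝ) ≤ (N:ℝ)+1 by positivity)
    linarith
  have hlogN' : 0 ≤ Real.log ((N:ℝ)+1) := Real.log_nonneg (by linarith)
  have hlogB : 0 ≤ Real.log B := Real.log_nonneg hB1.le
  rw [hlogδ]
  push_cast
  have hA : (0:ℝ) ≤ 2*(N:ℝ) := by positivity
  have h1 : 2*(N:ℝ)*Real.log 4 ≤ 2*(N:ℝ)*4 := mul_le_mul_of_nonneg_left hlog4 hA
  have h2 : 2*(N:ℝ)*Real.log ((N:ℝ)+1) ≤ 2*(N:ℝ)*(2*(N:ℝ)) := mul_le_mul_of_nonneg_left hlogN hA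
  have h3 : (N:ℝ) ≤ (N:ℝ)^2 := by nlinarith
  have h4 : (1:ℝ) ≤ (N:ℝ)^2 := one_le_pow₀ hNR
  nlinarith [h1, h2, h3, h4]
end
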